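/- The (strong) price of anarchy of the EQUI policy on m unrelated machines is at least (m+1)/4: there is an instance with m machines and job groups J_1,...,J_m (group J_j, j < m, has n_j = 2(m−1)!/(j−1)! jobs schedulable only on machines j and j+1, with processing times p_{j,j} = (j−1)!/(m−1)! and p_{j,j+1} = j!/(2(m−1)!); J_m has one job with p_{m,m} = 1) whose optimal makespan is at most 2, and the profile splitting each group J_j (j < m) evenly between machines j and j+1 (with J_m on machine m) is a strong Nash equilibrium with makespan (m+1)/2. -/

import Mathlib

/-- Load of machine `j` under profile `σ` (unrelated machines). -/
def urLoad {n m : ℕ} (p : Fin n → Fin m → ℝ) (σ : Fin n → Fin m) (j : Fin m) : ℝ :=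
  ∑ i ∈ Finset.univ.filter (fun i => σ i = j), p i j

/-- EQUI cost of job `i` in profile `σ` on unrelated machines. -/
def equiCost {n m : ℕ} (p : Fin n → Fin m → ℝ) (σ : Fin n → Fin m) (i : Fin n) : ℝ :=
  ∑ i' ∈ Finset.univ.filter (fun i' => σ i' = σ i), min (p i (σ i)) (p i' (σ i))

open Finset

namespace SpoaAux

def N (m j : ℕ) : ℕ := (m-1).factorial / j.factorial
def sz (m : ℕ) (j : Fin m) : ℕ := if j.val = m - 1 then 1 else 2 * N m j.val
abbrev Job (m : ℕ) := Σ j : Fin m, Fin (sz m j)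
def nxt {m : ℕ} (j : Fin m) : Fin m := ⟨(j.val+1) % m, Nat.mod_lt _ j.pos⟩
def mach {m : ℕ} (s : Job m) : Fin m := if s.2.val < N m s.1.val then s.1 else nxt s.1
noncomputable def pt (m : ℕ) (s : Job m) (x : Fin m) : ℝ :=
  if x = s.1 then (Nat.factorial s.1.val : ℝ) / Nat.factorial (m-1)
  else (Nat.factorial (s.1.val + 1) : ℝ) / (2 * Nat.factorial (m-1))
def alw {m : ℕ} (s : Job m) : Finset (Fin m) := univ.filter fun x => x = s.1 ∨ x.val = s.1.val + 1
noncomputable def q (m : ℕ) (k : Fin m) : ℝ := (Nat.factorial k.val : ℝ) / Nat.factorial (m-1)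
noncomputable def jload (m : ℕ) (τ : Job m → Fin m) (k : Fin m) : ℝ :=
  ∑ s ∈ univ.filter (fun s => τ s = k), pt m s k
noncomputable def jcost (m : ℕ) (τ : Job m → Fin m) (s : Job m) : ℝ :=
  ∑ s' ∈ univ.filter (fun s' => τ s' = τ s), min (pt m s (τ s)) (pt m s' (τ s))
def A (m : ℕ) (τ : Job m → Fin m) (j : Fin m) : ℕ :=
  (univ.filter fun s : Job m => s.1 = j ∧ τ s = j).card
def B (m : ℕ) (τ : Job m → Fin m) (j : Fin m) : ℕ :=
  (univ.filter fun s : Job m => s.1 = j ∧ τ s ≠ j).card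
def Fg (m : ℕ) (τ : Job m → Fin m) (k : Fin m) : ℕ :=
  (univ.filter fun s : Job m => τ s = k ∧ s.1 ≠ k).card

variable {m : ℕ}

lemma N_pos (hm : 1 ≤ m) (j : ℕ) (hj : j ≤ m - 1) : 1 ≤ N m j :=
  Nat.one_le_div_iff (Nat.factorial_pos j) |>.mpr (Nat.factorial_le hj)

lemma N_last : N m (m-1) = 1 := Nat.div_self (Nat.factorial_pos _)

lemma mem_alw (s : Job m) (x : Fin m) : x ∈ alw s ↔ x = s.1 ∨ x.val = s.1.val + 1 := by
  simp [alw]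

lemma card_val_lt (n c : ℕ) : (univ.filter fun v : Fin n => v.val < c).card = min c n := by
  have h : ((univ.filter fun v : Fin n => v.val < c).map Fin.valEmbedding) = Finset.range (min c n) := by
    ext k
    simp only [Finset.mem_map, Finset.mem_filter, Finset.mem_univ, true_and,
      Fin.valEmbedding_apply, Finset.mem_range, Nat.lt_min]
    constructor
    · rintro ⟨v, hv, rfl⟩; exact ⟨hv, v.isLt⟩
    · rintro ⟨h1, h2⟩; exact ⟨⟨k, h2⟩, h1, rfl⟩
  have := congrArg Finset.card h
  simpa using this

lemma filter_sigma_eq {f : Fin m → ℕ} (j : Fin m) (Q : ℕ → Prop) [DecidablePred Q] :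
    (univ.filter fun s : (Σ j, Fin (f j)) => s.1 = j ∧ Q s.2.val)
      = ((univ.filter fun v : Fin (f j) => Q v.val)).map ⟨Sigma.mk j, sigma_mk_injective⟩ := by
  ext s
  simp only [Finset.mem_filter, Finset.mem_univ, true_and, Finset.mem_map,
    Function.Embedding.coeFn_mk]
  constructor
  · rintro ⟨rfl, hq⟩; exact ⟨s.2, hq, rfl⟩
  · rintro ⟨v, hq, rfl⟩; exact ⟨rfl, hq⟩

lemma count_lt (j : Fin m) (c : ℕ) :
    (univ.filter fun s : Job m => s.1 = j ∧ s.2.val < c).card = min c (sz m j) := by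
  rw [filter_sigma_eq j (fun v => v < c), Finset.card_map, card_val_lt]

lemma count_fst (j : Fin m) : (univ.filter fun s : Job m => s.1 = j).card = sz m j := by
  have : (univ.filter fun s : Job m => s.1 = j)
      = (univ.filter fun s : Job m => s.1 = j ∧ s.2.val < sz m j) := by
    apply Finset.filter_congr; intro s _
    simp only [iff_self_and]
    exact fun h => h ▸ s.2.isLt
  rw [this, count_lt, min_self]

-- `mach` sends s to its own machine iff first half
lemma nxt_ne (hm : 2 ≤ m) (j : Fin m) : nxt j ≠ j := by
  intro h
  have := congrArg Fin.val h
  simp only [nxt] at this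
  rcases Nat.lt_or_ge (j.val + 1) m with h1 | h1
  · rw [Nat.mod_eq_of_lt h1] at this; omega
  · have hj : j.val + 1 = m := by have := j.isLt; omega
    rw [hj, Nat.mod_self] at this; omega

lemma nxt_val (j : Fin m) (hj : j.val < m - 1) : (nxt j).val = j.val + 1 := by
  have : j.val + 1 < m := by omega
  simp [nxt, Nat.mod_eq_of_lt this]

lemma mach_eq_iff (hm : 2 ≤ m) (s : Job m) : mach s = s.1 ↔ s.2.val < N m s.1.val := by
  unfold mach
  split
  · simp [*]
  · exact iff_of_false (nxt_ne hm s.1) (by assumption)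

lemma A_mach (hm : 2 ≤ m) (j : Fin m) : A m mach j = N m j.val := by
  unfold A
  have he : (univ.filter fun s : Job m => s.1 = j ∧ mach s = j)
      = (univ.filter fun s : Job m => s.1 = j ∧ s.2.val < N m j.val) := by
    apply Finset.filter_congr; intro s _
    constructor
    · rintro ⟨rfl, h2⟩; exact ⟨rfl, (mach_eq_iff hm s).mp h2⟩
    · rintro ⟨rfl, h2⟩; exact ⟨rfl, (mach_eq_iff hm s).mpr h2⟩
  rw [he, count_lt]
  unfold sz
  split
  · rename_i h; rw [h, N_last]; simp
  · rename_i h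
    have h1 : 1 ≤ N m j.val := N_pos (by omega) _ (by have := j.isLt; omega)
    omega

lemma AB (τ : Job m → Fin m) (j : Fin m) : A m τ j + B m τ j = sz m j := by
  unfold A B
  rw [← count_fst (m := m) j]
  rw [← Finset.filter_filter, ← Finset.filter_filter]
  exact Finset.card_filter_add_card_filter_not _

lemma B_mach (hm : 2 ≤ m) (j : Fin m) :
    B m mach j = if j.val = m - 1 then 0 else N m j.val := by
  have h := AB (m := m) mach j
  rw [A_mach hm] at h
  unfold sz at h
  split <;> rename_i hj
  · rw [hj, N_last] at h; simp [hj] at h; omega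
  · rw [if_neg hj] at h; omega

-- feasibility
lemma mach_feas (hm : 2 ≤ m) (s : Job m) : mach s ∈ alw s := by
  rw [mem_alw]
  unfold mach
  split
  · left; rfl
  · rename_i h
    right
    apply nxt_val
    by_contra hc
    have hj : s.1.val = m - 1 := by have := s.1.isLt; omega
    have hsz : sz m s.1 = 1 := by unfold sz; simp [hj]
    have h2 : s.2.val < 1 := hsz ▸ s.2.isLt
    have : 1 ≤ N m s.1.val := N_pos (by omega) _ (by omega)
    omega

lemma feas_or {τ : Job m → Fin m} (hτ : ∀ s, τ s ∈ alw s) (s : Job m) :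
    τ s = s.1 ∨ (τ s).val = s.1.val + 1 := (mem_alw s (τ s)).mp (hτ s)

lemma fact_ne : ((m-1).factorial : ℝ) ≠ 0 := by
  exact_mod_cast (Nat.factorial_pos _).ne'

lemma fact_ne' (j : ℕ) : (j.factorial : ℝ) ≠ 0 := by
  exact_mod_cast (Nat.factorial_pos _).ne'

lemma q_pos (k : Fin m) : 0 < q m k :=
  div_pos (by exact_mod_cast Nat.factorial_pos _) (by exact_mod_cast Nat.factorial_pos _)

lemma N_cast (j : Fin m) : (N m j.val : ℝ) = ((m-1).factorial : ℝ) / (j.val.factorial : ℝ) := by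
  unfold N
  rw [Nat.cast_div (Nat.factorial_dvd_factorial (by have := j.isLt; omega)) (fact_ne' _)]

lemma L1 (j : Fin m) : (N m j.val : ℝ) * q m j = 1 := by
  rw [N_cast, q]
  field_simp

lemma L2 (j k : Fin m) (h : k.val = j.val + 1) : (N m j.val : ℝ) * q m k = k.val := by
  rw [N_cast, q, h, Nat.factorial_succ]
  have h1 := fact_ne (m := m)
  have h2 := fact_ne' j.val
  push_cast
  field_simp

lemma Fg_zero {τ : Job m → Fin m} (hτ : ∀ s, τ s ∈ alw s) (k : Fin m) (hk : k.val = 0) :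
    Fg m τ k = 0 := by
  unfold Fg
  rw [Finset.card_eq_zero, Finset.filter_eq_empty_iff]
  rintro s - ⟨h1, h2⟩
  rcases feas_or hτ s with h3 | h3
  · exact h2 (h1 ▸ h3).symm
  · rw [h1] at h3; omega

lemma Fg_eq_B {τ : Job m → Fin m} (hτ : ∀ s, τ s ∈ alw s) (j k : Fin m)
    (h : k.val = j.val + 1) : Fg m τ k = B m τ j := by
  unfold Fg B
  congr 1
  apply Finset.filter_congr
  intro s _
  constructor
  · rintro ⟨h1, h2⟩
    rcases feas_or hτ s with h3 | h3
    · exact absurd (h1 ▸ h3).symm h2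
    · rw [h1] at h3
      have hs : s.1 = j := Fin.ext (by omega)
      refine ⟨hs, fun hh => ?_⟩
      rw [hh] at h1
      have := congrArg Fin.val h1
      omega
  · rintro ⟨h1, h2⟩
    rcases feas_or hτ s with h3 | h3
    · exact absurd (h3.trans h1) h2
    · rw [h1] at h3
      have hk : τ s = k := Fin.ext (by omega)
      refine ⟨hk, fun hh => ?_⟩
      have := congrArg Fin.val hh
      omega

lemma pt_home (s : Job m) (k : Fin m) (h : s.1 = k) : pt m s k = q m k := by
  unfold pt q
  rw [if_pos h.symm, h]

lemma pt_foreign {τ : Job m → Fin m} (hτ : ∀ s, τ s ∈ alw s) (s : Job m) (k : Fin m)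
    (h1 : τ s = k) (h2 : s.1 ≠ k) : pt m s k = q m k / 2 := by
  have h3 : k.val = s.1.val + 1 := by
    rcases feas_or hτ s with h4 | h4
    · exact absurd (h1 ▸ h4).symm h2
    · rw [h1] at h4; omega
  unfold pt q
  rw [if_neg (fun hh => h2 hh.symm), h3, div_div, mul_comm (2:ℝ)]

lemma sum_split (τ : Job m → Fin m) (k : Fin m) (f : Job m → ℝ) (c1 c2 : ℝ)
    (h1 : ∀ s, τ s = k → s.1 = k → f s = c1) (h2 : ∀ s, τ s = k → s.1 ≠ k → f s = c2) :
    ∑ s ∈ univ.filter (fun s => τ s = k), f s = (A m τ k : ℝ) * c1 + (Fg m τ k : ℝ) * c2 := by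
  rw [← Finset.sum_filter_add_sum_filter_not (univ.filter (fun s => τ s = k)) (fun s => s.1 = k)]
  rw [Finset.filter_filter, Finset.filter_filter]
  have e1 : ∑ s ∈ univ.filter (fun s : Job m => τ s = k ∧ s.1 = k), f s
      = (A m τ k : ℝ) * c1 := by
    rw [Finset.sum_congr rfl (fun s hs => by
      simp only [Finset.mem_filter] at hs
      exact h1 s hs.2.1 hs.2.2), Finset.sum_const, nsmul_eq_mul]
    have he : (univ.filter (fun s : Job m => τ s = k ∧ s.1 = k))
        = (univ.filter fun s : Job m => s.1 = k ∧ τ s = k) := by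
      apply Finset.filter_congr; intro s _; exact and_comm
    unfold A
    rw [he]
  have e2 : ∑ s ∈ univ.filter (fun s : Job m => τ s = k ∧ ¬ s.1 = k), f s
      = (Fg m τ k : ℝ) * c2 := by
    rw [Finset.sum_congr rfl (fun s hs => by
      simp only [Finset.mem_filter] at hs
      exact h2 s hs.2.1 hs.2.2), Finset.sum_const, nsmul_eq_mul]
    rfl
  rw [e1, e2]

lemma jload_eq {τ : Job m → Fin m} (hτ : ∀ s, τ s ∈ alw s) (k : Fin m) :
    jload m τ k = (A m τ k : ℝ) * q m k + (Fg m τ k : ℝ) * (q m k / 2) := by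
  unfold jload
  exact sum_split τ k _ _ _ (fun s _ hs => pt_home s k hs) (fun s hs1 hs2 => pt_foreign hτ s k hs1 hs2)

lemma jcost_home {τ : Job m → Fin m} (hτ : ∀ s, τ s ∈ alw s) (s : Job m) (hs : τ s = s.1) :
    jcost m τ s = (A m τ (τ s) : ℝ) * q m (τ s) + (Fg m τ (τ s) : ℝ) * (q m (τ s) / 2) := by
  unfold jcost
  have hp : pt m s (τ s) = q m (τ s) := pt_home s (τ s) hs.symm
  apply sum_split τ (τ s) _ _ _
  · intro s' h1 h2
    rw [hp, pt_home s' (τ s) h2, min_self]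
  · intro s' h1 h2
    rw [hp, pt_foreign hτ s' (τ s) h1 h2]
    exact min_eq_right (half_le_self (q_pos _).le)

lemma jcost_foreign {τ : Job m → Fin m} (hτ : ∀ s, τ s ∈ alw s) (s : Job m) (hs : τ s ≠ s.1) :
    jcost m τ s = (A m τ (τ s) : ℝ) * (q m (τ s) / 2) + (Fg m τ (τ s) : ℝ) * (q m (τ s) / 2) := by
  unfold jcost
  have hp : pt m s (τ s) = q m (τ s) / 2 := pt_foreign hτ s (τ s) rfl (fun hh => hs hh.symm)
  apply sum_split τ (τ s) _ _ _
  · intro s' h1 h2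
    rw [hp, pt_home s' (τ s) h2]
    exact min_eq_left (half_le_self (q_pos _).le)
  · intro s' h1 h2
    rw [hp, pt_foreign hτ s' (τ s) h1 h2, min_self]

lemma Fg_mach (hm : 2 ≤ m) (k : Fin m) :
    Fg m mach k = if k.val = 0 then 0 else N m (k.val - 1) := by
  by_cases hk : k.val = 0
  · rw [if_pos hk]; exact Fg_zero (mach_feas hm) k hk
  · rw [if_neg hk]
    have hlt : k.val - 1 < m := by have := k.isLt; omega
    have h := Fg_eq_B (mach_feas hm) ⟨k.val - 1, hlt⟩ k (by simp; omega)
    rw [h, B_mach hm]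
    have : ¬ (k.val - 1 = m - 1) := by have := k.isLt; omega
    simp [this]

lemma key_val (hm : 2 ≤ m) (k : Fin m) :
    (N m k.val : ℝ) * q m k + (Fg m mach k : ℝ) * (q m k / 2) = ((k.val : ℝ) + 2)/2 := by
  by_cases hk : k.val = 0
  · rw [Fg_mach hm k, if_pos hk, L1, hk]
    norm_num
  · rw [Fg_mach hm k, if_neg hk]
    have hlt : k.val - 1 < m := by have := k.isLt; omega
    have e1 := L1 k
    have e2 := L2 ⟨k.val - 1, hlt⟩ k (by simp; omega)
    simp only at e2
    linarith

lemma jload_mach (hm : 2 ≤ m) (k : Fin m) : jload m mach k = ((k.val : ℝ) + 2)/2 := by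
  rw [jload_eq (mach_feas hm), A_mach hm, key_val hm k]

lemma jcost_mach (hm : 2 ≤ m) (s : Job m) : jcost m mach s = ((s.1.val : ℝ) + 2)/2 := by
  by_cases hs : mach s = s.1
  · rw [jcost_home (mach_feas hm) s hs, hs, A_mach hm, key_val hm s.1]
  · have hk : (mach s).val = s.1.val + 1 := by
      rcases feas_or (mach_feas hm) s with h | h
      · exact absurd h hs
      · exact h
    rw [jcost_foreign (mach_feas hm) s hs, A_mach hm,
      Fg_eq_B (mach_feas hm) s.1 (mach s) hk, B_mach hm]
    have hne : ¬ (s.1.val = m - 1) := by have := (mach s).isLt; omega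
    rw [if_neg hne]
    have e1 := L1 (mach s)
    have e2 := L2 s.1 (mach s) hk
    have e3 : ((mach s).val : ℝ) = (s.1.val : ℝ) + 1 := by exact_mod_cast hk
    linarith

lemma bridge {r : ℝ} (hr : 0 < r) {a b c d : ℕ}
    (h : (a : ℝ) * r + (b : ℝ) * (r/2) < (c : ℝ) * r + (d : ℝ) * (r/2)) :
    2*a + b < 2*c + d := by
  have h2 : ((2*a+b : ℕ) : ℝ) * (r/2) < ((2*c+d : ℕ) : ℝ) * (r/2) := by
    push_cast
    calc (2*(a:ℝ)+(b:ℝ)) * (r/2) = (a:ℝ)*r + (b:ℝ)*(r/2) := by ring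
    _ < (c:ℝ)*r + (d:ℝ)*(r/2) := h
    _ = (2*(c:ℝ)+(d:ℝ)) * (r/2) := by ring
  exact_mod_cast (mul_lt_mul_iff_of_pos_right (by linarith)).mp h2

lemma bridge2 {r : ℝ} (hr : 0 < r) {a b c d : ℕ}
    (h : (a : ℝ) * (r/2) + (b : ℝ) * (r/2) < (c : ℝ) * (r/2) + (d : ℝ) * (r/2)) :
    a + b < c + d := by
  have h2 : ((a+b : ℕ) : ℝ) * (r/2) < ((c+d : ℕ) : ℝ) * (r/2) := by
    push_cast; ring_nf; ring_nf at h; linarith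
  exact_mod_cast (mul_lt_mul_iff_of_pos_right (by linarith)).mp h2

lemma top_forced {τ : Job m → Fin m} (hτ : ∀ s, τ s ∈ alw s) (s : Job m)
    (hs : s.1.val = m - 1) : τ s = s.1 := by
  rcases feas_or hτ s with h | h
  · exact h
  · exfalso; have h1 := (τ s).isLt; have h2 := s.1.isLt; omega

lemma sne (hm : 2 ≤ m) :
    ¬ ∃ (S : Finset (Job m)) (σ' : Job m → Fin m), S.Nonempty ∧ (∀ s, σ' s ∈ alw s) ∧
      (∀ s ∉ S, σ' s = mach s) ∧ ∀ s ∈ S, jcost m σ' s < jcost m mach s := by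
  rintro ⟨S, σ', hne, hfeas, hagree, himp⟩
  classical
  -- top group is stuck
  have xlast : ∀ k : Fin m, k.val = m - 1 → A m σ' k = 1 := by
    intro k hk
    unfold A
    have he : (univ.filter fun s : Job m => s.1 = k ∧ σ' s = k)
        = (univ.filter fun s : Job m => s.1 = k) := by
      apply Finset.filter_congr
      intro s _
      constructor
      · exact fun h => h.1
      · intro h1
        exact ⟨h1, by rw [top_forced hfeas s (by rw [h1, hk]), h1]⟩
    rw [he, count_fst]
    unfold sz
    rw [if_pos hk]
  -- coalition witnesses
  have existsS_B : ∀ j : Fin m, N m j.val < B m σ' j → ∃ s ∈ S, s.1 = j ∧ σ' s ≠ j := by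
    intro j hj
    by_contra hc
    push_neg at hc
    have hsub : (univ.filter fun s : Job m => s.1 = j ∧ σ' s ≠ j)
        ⊆ (univ.filter fun s : Job m => s.1 = j ∧ mach s ≠ j) := by
      intro s hs
      simp only [Finset.mem_filter, Finset.mem_univ, true_and] at hs ⊢
      have hns : s ∉ S := fun hS => hs.2 (hc s hS hs.1)
      exact ⟨hs.1, by rw [← hagree s hns]; exact hs.2⟩
    have h1 : B m σ' j ≤ B m mach j := Finset.card_le_card hsub
    have h2 := B_mach hm j
    by_cases hj2 : j.val = m - 1 <;> simp [hj2] at h2 <;> omega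
  have existsS_A : ∀ j : Fin m, N m j.val < A m σ' j → ∃ s ∈ S, s.1 = j ∧ σ' s = j := by
    intro j hj
    by_contra hc
    push_neg at hc
    have hsub : (univ.filter fun s : Job m => s.1 = j ∧ σ' s = j)
        ⊆ (univ.filter fun s : Job m => s.1 = j ∧ mach s = j) := by
      intro s hs
      simp only [Finset.mem_filter, Finset.mem_univ, true_and] at hs ⊢
      have hns : s ∉ S := fun hS => (hc s hS hs.1) hs.2
      exact ⟨hs.1, by rw [← hagree s hns]; exact hs.2⟩
    have h1 : A m σ' j ≤ A m mach j := Finset.card_le_card hsub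
    rw [A_mach hm] at h1
    omega
  -- improvement conditions
  have home_cond : ∀ s ∈ S, σ' s = s.1 →
      2 * A m σ' s.1 + Fg m σ' s.1 < 2 * N m s.1.val + Fg m mach s.1 := by
    intro s hs hss
    have h := himp s hs
    rw [jcost_home hfeas s hss, hss, jcost_mach hm s, ← key_val hm s.1] at h
    exact bridge (q_pos s.1) h
  have for_cond : ∀ s ∈ S, σ' s ≠ s.1 →
      A m σ' (σ' s) + B m σ' s.1 < N m (σ' s).val + N m s.1.val := by
    intro s hs hss
    have hk : (σ' s).val = s.1.val + 1 := by
      rcases feas_or hfeas s with h | h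
      · exact absurd h hss
      · exact h
    have h := himp s hs
    rw [jcost_foreign hfeas s hss, jcost_mach hm s,
      Fg_eq_B hfeas s.1 (σ' s) hk] at h
    have e1 := L1 (σ' s)
    have e2 := L2 s.1 (σ' s) hk
    have e3 : ((s.1.val : ℝ) + 2)/2
        = (N m (σ' s).val : ℝ) * (q m (σ' s) / 2) + (N m s.1.val : ℝ) * (q m (σ' s) / 2) := by
      have e4 : ((σ' s).val : ℝ) = (s.1.val : ℝ) + 1 := by exact_mod_cast hk
      linarith
    rw [e3] at h
    exact bridge2 (q_pos (σ' s)) h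
  -- the upward chain
  have chain : ∀ t (k : Fin m), m - 1 - k.val ≤ t → A m σ' k < N m k.val → False := by
    intro t
    induction t with
    | zero =>
      intro k h1 h2
      have hk : k.val = m - 1 := by have := k.isLt; omega
      rw [xlast k hk, hk, N_last] at h2
      omega
    | succ t ih =>
      intro k h1 h2
      by_cases hk : k.val = m - 1
      · rw [xlast k hk, hk, N_last] at h2; omega
      · have hk2 : k.val < m - 1 := by have := k.isLt; omega
        have hxy := AB (m := m) σ' k
        have hsz : sz m k = 2 * N m k.val := by unfold sz; rw [if_neg hk]
        have hyB : N m k.val < B m σ' k := by omega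
        obtain ⟨s, hsS, hs1, hs2⟩ := existsS_B k hyB
        have hss : σ' s ≠ s.1 := by rw [hs1]; exact hs2
        have hc := for_cond s hsS hss
        rw [hs1] at hc
        have hk' : (σ' s).val = k.val + 1 := by
          rcases feas_or hfeas s with h | h
          · exact absurd h hss
          · rw [hs1] at h; exact h
        have hA : A m σ' (σ' s) < N m (σ' s).val := by omega
        exact ih (σ' s) (by omega) hA
  -- pick minimal-group coalition member
  obtain ⟨s₀, hs₀S, hmin⟩ := S.exists_min_image (fun s => s.1.val) hne
  have untouchedB : ∀ j : Fin m, j.val < s₀.1.val → B m σ' j = B m mach j := by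
    intro j hj
    unfold B
    congr 1
    apply Finset.filter_congr
    intro s _
    have hns : s.1 = j → s ∉ S := by
      intro h1 hS
      have := hmin s hS
      rw [h1] at this
      omega
    constructor
    · rintro ⟨h1, h2⟩; exact ⟨h1, by rwa [← hagree s (hns h1)]⟩
    · rintro ⟨h1, h2⟩; exact ⟨h1, by rwa [hagree s (hns h1)]⟩
  have hFg0 : Fg m σ' s₀.1 = Fg m mach s₀.1 := by
    by_cases h0 : s₀.1.val = 0
    · rw [Fg_zero hfeas s₀.1 h0, Fg_zero (mach_feas hm) s₀.1 h0]
    · have hlt : s₀.1.val - 1 < m := by have := s₀.1.isLt; omega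
      have hj : s₀.1.val = (⟨s₀.1.val - 1, hlt⟩ : Fin m).val + 1 := by simp; omega
      rw [Fg_eq_B hfeas _ _ hj, Fg_eq_B (mach_feas hm) _ _ hj,
        untouchedB ⟨s₀.1.val - 1, hlt⟩ (by simp; omega)]
  have hhome : A m σ' s₀.1 < N m s₀.1.val → False := fun h =>
    chain (m - 1 - s₀.1.val) s₀.1 le_rfl h
  by_cases htop : s₀.1.val = m - 1
  · have hss : σ' s₀ = s₀.1 := top_forced hfeas s₀ htop
    have hc := home_cond s₀ hs₀S hss
    rw [hFg0, xlast s₀.1 htop, htop, N_last] at hc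
    omega
  · have hlt : s₀.1.val < m - 1 := by have := s₀.1.isLt; omega
    have hsz : sz m s₀.1 = 2 * N m s₀.1.val := by unfold sz; rw [if_neg htop]
    have hxy := AB (m := m) σ' s₀.1
    by_cases hss : σ' s₀ = s₀.1
    · have hc := home_cond s₀ hs₀S hss
      rw [hFg0] at hc
      exact hhome (by omega)
    · have hc := for_cond s₀ hs₀S hss
      by_cases hyb : N m s₀.1.val < B m σ' s₀.1
      · exact hhome (by omega)
      · by_cases hxa : N m s₀.1.val < A m σ' s₀.1
        · obtain ⟨s, hsS, hs1, hs2⟩ := existsS_A s₀.1 hxa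
          have hc2 := home_cond s hsS (by rw [hs1]; exact hs2)
          rw [hs1] at hc2
          rw [hFg0] at hc2
          omega
        · -- A = B = N at s₀.1, so A σ' (σ' s₀) < N
          have hk : (σ' s₀).val = s₀.1.val + 1 := by
            rcases feas_or hfeas s₀ with h | h
            · exact absurd h hss
            · exact h
          have hA : A m σ' (σ' s₀) < N m (σ' s₀).val := by omega
          exact chain (m - 1 - (σ' s₀).val) (σ' s₀) le_rfl hA

lemma jload_opt (hm : 2 ≤ m) (x : Fin m) : jload m (fun s => s.1) x ≤ 2 := by
  have hfeas : ∀ s : Job m, (fun s : Job m => s.1) s ∈ alw s := fun s => by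
    rw [mem_alw]; exact Or.inl rfl
  rw [jload_eq hfeas]
  have hFg : Fg m (fun s => s.1) x = 0 := by
    unfold Fg
    rw [Finset.card_eq_zero, Finset.filter_eq_empty_iff]
    rintro s - ⟨h1, h2⟩
    exact h2 h1
  have hA : A m (fun s => s.1) x = sz m x := by
    unfold A
    rw [← count_fst (m := m) x]
    congr 1
    apply Finset.filter_congr
    intro s _
    simp
  rw [hFg, hA]
  simp only [Nat.cast_zero, zero_mul, add_zero]
  unfold sz
  split
  · rename_i h
    have h1 := L1 x
    have h2 : N m x.val = 1 := by rw [h]; exact N_last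
    rw [h2] at h1
    push_cast at h1 ⊢
    linarith
  · have h1 := L1 x
    push_cast
    nlinarith [q_pos (m := m) x]

end SpoaAux

namespace SpoaAux

lemma card_filter_equiv {n : ℕ} (e : Fin n ≃ Job m) (P : Job m → Prop) [DecidablePred P] :
    (univ.filter fun i => P (e i)).card = (univ.filter P).card := by
  apply Finset.card_bij (fun i _ => e i)
  · intro i hi
    simp only [Finset.mem_filter, Finset.mem_univ, true_and] at hi ⊢
    exact hi
  · intro i _ i' _ h
    exact e.injective h
  · intro s hs
    simp only [Finset.mem_filter, Finset.mem_univ, true_and] at hs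
    exact ⟨e.symm s, by simp [hs], by simp⟩

lemma cost_transport {n : ℕ} (e : Fin n ≃ Job m) (τ₀ : Job m → Fin m) (i : Fin n) :
    equiCost (fun i => pt m (e i)) (fun i => τ₀ (e i)) i = jcost m τ₀ (e i) := by
  unfold equiCost jcost
  apply Finset.sum_equiv e
  · intro i'
    simp
  · intro i' _
    rfl

lemma load_transport {n : ℕ} (e : Fin n ≃ Job m) (τ₀ : Job m → Fin m) (x : Fin m) :
    urLoad (fun i => pt m (e i)) (fun i => τ₀ (e i)) x = jload m τ₀ x := by
  unfold urLoad jload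
  apply Finset.sum_equiv e
  · intro i'
    simp
  · intro i' _
    rfl

end SpoaAux


open SpoaAux Finset in
/-- The (strong) price of anarchy of EQUI on `m` unrelated machines is
at least `(m+1)/4`. There is an instance with job groups `J_1,…,J_m` (group `J_j`,
`j < m`, has `n_j = 2(m−1)!/(j−1)!` jobs allowed only on machines `j` and `j+1`, with
`p_{j,j} = (j−1)!/(m−1)!` and `p_{j,j+1} = j!/(2(m−1)!)`; `J_m` has one job with
`p_{m,m} = 1`), whose optimal makespan is at most `2`, while the profile splitting
each group `J_j` (`j < m`) evenly between machines `j` and `j+1` (and `J_m` on machine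
`m`) is a strong Nash equilibrium of makespan `(m+1)/2`.
(Machines are indexed by `Fin m`, so machine `j` of the paper is index `j−1`, and the
group of a job `i` is `(grp i).val + 1` in the paper's 1-based numbering.) -/
theorem equi_unrelated_spoa_lower (m : ℕ) (hm : 2 ≤ m) :
    ∃ (nn : ℕ) (grp : Fin nn → Fin m) (p : Fin nn → Fin m → ℝ)
      (allowed : Fin nn → Finset (Fin m)) (σ : Fin nn → Fin m),
      -- group sizes: `n_j = 2(m−1)!/(j−1)!` for `j < m`, and one job in the last group
      (∀ j : Fin m, (Finset.univ.filter (fun i : Fin nn => grp i = j)).card =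
        if j.val = m - 1 then 1
        else 2 * Nat.factorial (m - 1) / Nat.factorial j.val) ∧
      -- a job of group `j` may go only on machines `j` and `j+1`
      (∀ (i : Fin nn) (x : Fin m),
        x ∈ allowed i ↔ x = grp i ∨ x.val = (grp i).val + 1) ∧
      -- processing times
      (∀ i : Fin nn, p i (grp i) =
        (Nat.factorial (grp i).val : ℝ) / Nat.factorial (m - 1)) ∧
      (∀ (i : Fin nn) (x : Fin m), x.val = (grp i).val + 1 →
        p i x = (Nat.factorial ((grp i).val + 1) : ℝ) / (2 * Nat.factorial (m - 1))) ∧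
      -- the profile is feasible and splits every group `j < m` evenly
      (∀ i, σ i ∈ allowed i) ∧
      (∀ j : Fin m, j.val < m - 1 →
        (Finset.univ.filter (fun i : Fin nn => grp i = j ∧ σ i = j)).card =
          Nat.factorial (m - 1) / Nat.factorial j.val ∧
        (Finset.univ.filter (fun i : Fin nn => grp i = j ∧ σ i ≠ j)).card =
          Nat.factorial (m - 1) / Nat.factorial j.val) ∧
      -- strong Nash equilibrium (moves restricted to allowed machines)
      (¬ ∃ (S : Finset (Fin nn)) (σ' : Fin nn → Fin m), S.Nonempty ∧
          (∀ i, σ' i ∈ allowed i) ∧ (∀ i ∉ S, σ' i = σ i) ∧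
          ∀ i ∈ S, equiCost p σ' i < equiCost p σ i) ∧
      -- its makespan is `(m+1)/2`
      (∀ x, urLoad p σ x ≤ ((m : ℝ) + 1) / 2) ∧
      (∃ x, urLoad p σ x = ((m : ℝ) + 1) / 2) ∧
      -- and the optimal makespan is at most `2`
      (∃ τ : Fin nn → Fin m, (∀ i, τ i ∈ allowed i) ∧ ∀ x, urLoad p τ x ≤ 2) := by
  classical
  obtain ⟨e⟩ : Nonempty (Fin (Fintype.card (Job m)) ≃ Job m) :=
    ⟨(Fintype.equivFin (Job m)).symm⟩
  refine ⟨Fintype.card (Job m), fun i => (e i).1, fun i => pt m (e i),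
    fun i => alw (e i), fun i => mach (e i), ?_, ?_, ?_, ?_, ?_, ?_, ?_, ?_, ?_, ?_⟩
  · -- group sizes
    intro j
    rw [card_filter_equiv e (fun s => s.1 = j), count_fst]
    unfold sz N
    split
    · rfl
    · rw [Nat.mul_div_assoc 2 (Nat.factorial_dvd_factorial (by have := j.isLt; omega))]
  · -- allowed
    intro i x
    exact mem_alw (e i) x
  · -- p home
    intro i
    show pt m (e i) ((e i).1) = _
    unfold pt
    rw [if_pos rfl]
  · -- p foreign
    intro i x hx
    simp only at hx
    show pt m (e i) x = _
    unfold pt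
    rw [if_neg (fun hh : x = (e i).1 => by rw [hh] at hx; omega)]
  · -- feasibility
    exact fun i => mach_feas hm (e i)
  · -- split counts
    intro j hj
    constructor
    · rw [card_filter_equiv e (fun s => s.1 = j ∧ mach s = j)]
      exact A_mach hm j
    · rw [card_filter_equiv e (fun s => s.1 = j ∧ mach s ≠ j)]
      have h := B_mach hm j
      rw [if_neg (by omega)] at h
      exact h
  · -- strong Nash equilibrium
    rintro ⟨S, σ', hne, hfeas, hagree, himp⟩
    apply sne hm
    refine ⟨S.image e, fun s => σ' (e.symm s), hne.image e, ?_, ?_, ?_⟩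
    · intro s
      have := hfeas (e.symm s)
      simpa using this
    · intro s hs
      have hni : e.symm s ∉ S := by
        intro h
        exact hs (by simpa using Finset.mem_image_of_mem e h)
      have := hagree (e.symm s) hni
      simpa using this
    · intro s hs
      obtain ⟨i, hiS, rfl⟩ := Finset.mem_image.mp hs
      have h1 : (fun s => σ' (e.symm s)) = (fun i' => σ' i') ∘ e.symm := rfl
      have h2 : equiCost (fun i => pt m (e i)) σ' i
          = jcost m (fun s => σ' (e.symm s)) (e i) := by
        have hσ : σ' = fun i' => (fun s => σ' (e.symm s)) (e i') := by
          funext i'; simp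
        conv_lhs => rw [hσ]
        exact cost_transport e (fun s => σ' (e.symm s)) i
      have h3 : equiCost (fun i => pt m (e i)) (fun i => mach (e i)) i
          = jcost m mach (e i) := cost_transport e mach i
      rw [← h2, ← h3]
      exact himp i hiS
  · -- makespan bound
    intro x
    rw [load_transport e mach x, jload_mach hm x]
    have h1 : (x.val : ℝ) + 1 ≤ m := by exact_mod_cast x.isLt
    linarith
  · -- makespan witness
    refine ⟨⟨m - 1, by omega⟩, ?_⟩
    rw [load_transport e mach _, jload_mach hm _]
    have h1 : ((m - 1 : ℕ) : ℝ) = (m : ℝ) - 1 := by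
      have : 1 ≤ m := by omega
      push_cast [this]
      ring
    simp only [h1]
    ring
  · -- optimum
    refine ⟨fun i => (e i).1, fun i => by rw [mem_alw]; exact Or.inl rfl, fun x => ?_⟩
    rw [load_transport e (fun s => s.1) x]
    exact jload_opt hm x
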